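/- arXiv:2512.16911 — 5 statements merged into one kernel-verified Lean document; each statement's English description precedes it below -/
import Mathlib

section
/- Fix a real number ε ∈ (0, 1/8] and a positive integer T with T ≤ 1/(20ε). Let β be the probability mass function on the three-element action set {a₁, a₂, a₃} given by β(a₁) = 1 − 4ε, β(a₂) = 2ε, β(a₃) = 2ε, and let r¹, r² : {a₁,a₂,a₃} → ℝ be the reward functions r¹(a₁)=0, r¹(a₂)=1, r¹(a₃)=0 and r²(a₁)=0, r²(a₂)=0, r²(a₃)=1. Draw X₁, …, X_T i.i.d. from β. Then with probability at least 1/2, every draw X_t equals a₁, and moreover on this event every probability mass function π on {a₁,a₂,a₃} satisfying π(a) = 0 for every action a not appearing among X₁, …, X_T fulfills J_i(β) − ε > J_i(π) simultaneously for i = 1 and i = 2. -/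
open MeasureTheory
open scoped ENNReal

/-- First part of Proposition 4.2: on the three-armed bandit with demonstrator
`β = (1-4ε, 2ε, 2ε)` and rewards `r¹ = (0,1,0)`, `r² = (0,0,1)`, if `T ≤ 1/(20ε)` then with
probability at least `1/2` over a dataset of `T` i.i.d. draws from `β`, every draw equals `a₁`,
and every policy `π` supported on the observed actions satisfies `J_i(π) < J_i(β) - ε` for
both rewards `i = 1, 2`. -/
theorem stmt0 (ε : ℝ) (hε : ε ∈ Set.Ioc (0 : ℝ) (1/8)) (T : ℕ) (hT : 0 < T)
    (hTε : (T : ℝ) ≤ 1 / (20 * ε))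
    (β : PMF (Fin 3))
    (hβ0 : β 0 = ENNReal.ofReal (1 - 4 * ε))
    (hβ1 : β 1 = ENNReal.ofReal (2 * ε))
    (hβ2 : β 2 = ENNReal.ofReal (2 * ε))
    (r : Fin 2 → Fin 3 → ℝ)
    (hr1 : r 0 = ![0, 1, 0]) (hr2 : r 1 = ![0, 0, 1]) :
    (1 : ℝ≥0∞) / 2 ≤
      Measure.pi (fun _ : Fin T => β.toMeasure)
        {x : Fin T → Fin 3 |
          (∀ t, x t = 0) ∧
          ∀ π : PMF (Fin 3), (∀ a : Fin 3, (∀ t, x t ≠ a) → π a = 0) →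
            ∀ i : Fin 2, ∑ a : Fin 3, (π a).toReal * r i a
              < (∑ a : Fin 3, (β a).toReal * r i a) - ε} := by
  obtain ⟨hε0, hε8⟩ := hε
  -- the all-zero cylinder is contained in the event
  have hsub : (Set.univ.pi fun _ : Fin T => ({0} : Set (Fin 3))) ⊆
      {x : Fin T → Fin 3 |
        (∀ t, x t = 0) ∧
        ∀ π : PMF (Fin 3), (∀ a : Fin 3, (∀ t, x t ≠ a) → π a = 0) →
          ∀ i : Fin 2, ∑ a : Fin 3, (π a).toReal * r i a
            < (∑ a : Fin 3, (β a).toReal * r i a) - ε} := by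
    intro x hx
    have hx0 : ∀ t, x t = 0 := fun t => hx t (Set.mem_univ t)
    refine ⟨hx0, fun π hπ i => ?_⟩
    have hπ1 : π 1 = 0 := hπ 1 (fun t => by rw [hx0 t]; decide)
    have hπ2 : π 2 = 0 := hπ 2 (fun t => by rw [hx0 t]; decide)
    have hβ0' : (β 0).toReal = 1 - 4 * ε := by
      rw [hβ0, ENNReal.toReal_ofReal (by linarith)]
    have hβ1' : (β 1).toReal = 2 * ε := by
      rw [hβ1, ENNReal.toReal_ofReal (by linarith)]
    have hβ2' : (β 2).toReal = 2 * ε := by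
      rw [hβ2, ENNReal.toReal_ofReal (by linarith)]
    fin_cases i <;>
      simp [Fin.sum_univ_three, hr1, hr2, hπ1, hπ2, hβ0', hβ1', hβ2'] <;> linarith
  refine le_trans ?_ (measure_mono hsub)
  rw [Measure.pi_pi]
  have hsing : β.toMeasure ({0} : Set (Fin 3)) = ENNReal.ofReal (1 - 4 * ε) := by
    rw [PMF.toMeasure_apply_singleton _ _ (measurableSet_singleton 0), hβ0]
  rw [hsing, Finset.prod_const, Finset.card_univ, Fintype.card_fin]
  rw [← ENNReal.ofReal_pow (by linarith)]
  have h20 : 4 * ε * T ≤ 1 / 5 := by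
    have h20' : 20 * ε > 0 := by linarith
    rw [le_div_iff₀ h20'] at hTε
    nlinarith
  have hbern : 1 - 4 * ε * T ≤ (1 - 4 * ε) ^ T := by
    have := one_add_mul_le_pow (a := -(4 * ε)) (by linarith) T
    calc 1 - 4 * ε * T = 1 + T * (-(4 * ε)) := by ring
      _ ≤ (1 + -(4 * ε)) ^ T := this
      _ = (1 - 4 * ε) ^ T := by ring_nf
  have hhalf : (1 : ℝ) / 2 ≤ (1 - 4 * ε) ^ T := by linarith
  calc (1 : ℝ≥0∞) / 2 = ENNReal.ofReal (1 / 2) := by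
        rw [ENNReal.ofReal_div_of_pos (by norm_num)]; simp
    _ ≤ ENNReal.ofReal ((1 - 4 * ε) ^ T) := ENNReal.ofReal_le_ofReal hhalf
end

section
/- Let 𝒜 = {a₁, a₂, a₃} and let r¹, r² : 𝒜 → ℝ be the reward functions r¹(a₁)=0, r¹(a₂)=1, r¹(a₃)=0 and r²(a₁)=0, r²(a₂)=0, r²(a₃)=1. Let β̂ be any probability mass function on 𝒜 with β̂(a₂) = β̂(a₃) = 0. For i ∈ {1,2}, let Pᵢ denote the distribution of a dataset D = ((A₁, rⁱ(A₁)), …, (A_{T'}, rⁱ(A_{T'}))) of T' i.i.d. action–reward pairs with each Aₜ drawn from β̂. Then for every measurable map π̂ from datasets in (𝒜 × ℝ)^{T'} to probability mass functions on 𝒜, it holds that max_{i∈{1,2}} E_{D∼Pᵢ}[ max_π J_i(π) − J_i(π̂(D)) ] ≥ 1/2, where the inner maximum is over all probability mass functions π on 𝒜. -/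
open MeasureTheory
open scoped ENNReal

private lemma sup_pmf_coord (b : Fin 3) : (⨆ π : PMF (Fin 3), (π b).toReal) = 1 := by
  apply le_antisymm
  · exact ciSup_le fun π => by
      simpa using ENNReal.toReal_mono ENNReal.one_ne_top (π.coe_le_one b)
  · refine le_ciSup_of_le ⟨1, ?_⟩ (PMF.pure b) (by simp)
    rintro x ⟨π, rfl⟩
    simpa using ENNReal.toReal_mono ENNReal.one_ne_top (π.coe_le_one b)

/-- Second part of Proposition 4.2: with rewards `r¹ = (0,1,0)`, `r² = (0,0,1)` on three arms,
and `β̂` a policy with `β̂(a₂) = β̂(a₃) = 0`, for any measurable estimator `π̂` mapping datasets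
of `T'` i.i.d. action–reward pairs `(Aₜ, rⁱ(Aₜ))`, `Aₜ ∼ β̂`, to policies, the worst case (over
`i ∈ {1,2}`) expected suboptimality `E[max_π J_i(π) − J_i(π̂(D))]` is at least `1/2`. -/
theorem stmt1 (T' : ℕ) (hT' : 0 < T')
    (r : Fin 2 → Fin 3 → ℝ)
    (hr1 : r 0 = ![0, 1, 0]) (hr2 : r 1 = ![0, 0, 1])
    (βhat : PMF (Fin 3)) (hβ1 : βhat 1 = 0) (hβ2 : βhat 2 = 0)
    (P : Fin 2 → Measure (Fin T' → Fin 3 × ℝ))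
    (hP : ∀ i, P i =
      Measure.pi (fun _ : Fin T' =>
        Measure.map (fun a : Fin 3 => (a, r i a)) βhat.toMeasure))
    (πhat : (Fin T' → Fin 3 × ℝ) → PMF (Fin 3))
    (hπhat : ∀ a : Fin 3, Measurable fun D => πhat D a) :
    (1 : ℝ) / 2 ≤
      max
        (∫ D, ((⨆ π : PMF (Fin 3), ∑ a : Fin 3, (π a).toReal * r 0 a) -
            ∑ a : Fin 3, (πhat D a).toReal * r 0 a) ∂(P 0))
        (∫ D, ((⨆ π : PMF (Fin 3), ∑ a : Fin 3, (π a).toReal * r 1 a) -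
            ∑ a : Fin 3, (πhat D a).toReal * r 1 a) ∂(P 1)) := by
  -- βhat is the point mass at 0
  have hβ : βhat = PMF.pure 0 := by
    have h : βhat 0 = 1 := by
      have := βhat.tsum_coe
      rw [tsum_fintype] at this
      simpa [Fin.sum_univ_three, hβ1, hβ2] using this
    ext a
    fin_cases a <;> simp [h, hβ1, hβ2]
  have hβm : βhat.toMeasure = Measure.dirac 0 := by
    rw [hβ, PMF.toMeasure_pure]
  -- P 0 = P 1
  have hmap : ∀ i : Fin 2,
      Measure.map (fun a : Fin 3 => (a, r i a)) βhat.toMeasure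
        = Measure.dirac ((0 : Fin 3), (0 : ℝ)) := by
    intro i
    rw [hβm, Measure.map_dirac' (by measurability)]
    fin_cases i <;> simp [hr1, hr2]
  have hPeq : P 1 = P 0 := by rw [hP 0, hP 1, hmap 0, hmap 1]
  -- rewrite the sums
  have hsum0 : ∀ π : PMF (Fin 3), ∑ a : Fin 3, (π a).toReal * r 0 a = (π 1).toReal := by
    intro π; simp [hr1, Fin.sum_univ_three]
  have hsum1 : ∀ π : PMF (Fin 3), ∑ a : Fin 3, (π a).toReal * r 1 a = (π 2).toReal := by
    intro π; simp [hr2, Fin.sum_univ_three]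
  have hsup0 : (⨆ π : PMF (Fin 3), ∑ a : Fin 3, (π a).toReal * r 0 a) = 1 := by
    simp only [hsum0]; exact sup_pmf_coord 1
  have hsup1 : (⨆ π : PMF (Fin 3), ∑ a : Fin 3, (π a).toReal * r 1 a) = 1 := by
    simp only [hsum1]; exact sup_pmf_coord 2
  set μ := P 0 with hμ
  have hprob : IsProbabilityMeasure μ := by
    rw [hμ, hP 0, hmap 0]
    infer_instance
  -- integrands
  have hmeas : ∀ b : Fin 3, Measurable fun D => (πhat D b).toReal :=
    fun b => (ENNReal.measurable_toReal).comp (hπhat b)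
  have hbdd : ∀ (b : Fin 3) (D : Fin T' → Fin 3 × ℝ), (πhat D b).toReal ≤ 1 := by
    intro b D
    simpa using ENNReal.toReal_mono ENNReal.one_ne_top ((πhat D).coe_le_one b)
  have hint : ∀ b : Fin 3, Integrable (fun D => (πhat D b).toReal) μ := by
    intro b
    refine (integrable_const (1:ℝ)).mono' (hmeas b).aestronglyMeasurable ?_
    filter_upwards with D
    rw [Real.norm_eq_abs, abs_of_nonneg ENNReal.toReal_nonneg]
    exact hbdd b D
  have hI : ∀ b : Fin 3, ∫ D, ((1:ℝ) - (πhat D b).toReal) ∂μ = 1 - ∫ D, (πhat D b).toReal ∂μ := by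
    intro b
    rw [integral_sub (integrable_const 1) (hint b), integral_const]
    simp
  have hsum_le : ∫ D, (πhat D 1).toReal ∂μ + ∫ D, (πhat D 2).toReal ∂μ ≤ 1 := by
    rw [← integral_add (hint 1) (hint 2)]
    calc ∫ D, ((πhat D 1).toReal + (πhat D 2).toReal) ∂μ
        ≤ ∫ _D, (1:ℝ) ∂μ := by
          refine integral_mono ((hint 1).add (hint 2)) (integrable_const 1) fun D => ?_
          have h := (πhat D).tsum_coe
          rw [tsum_fintype, Fin.sum_univ_three] at h
          have h12 : πhat D 1 + πhat D 2 ≤ 1 := by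
            calc πhat D 1 + πhat D 2 ≤ πhat D 0 + (πhat D 1 + πhat D 2) := le_add_self
            _ = 1 := by rw [← h]; ring
          have := ENNReal.toReal_mono ENNReal.one_ne_top h12
          rwa [ENNReal.toReal_add ((πhat D).apply_ne_top 1) ((πhat D).apply_ne_top 2), ENNReal.toReal_one] at this
    _ = 1 := by simp
  -- main bound
  rw [hPeq]
  simp only [hsum0, hsum1, sup_pmf_coord]
  have hA := hI 1
  have hB := hI 2
  set x := ∫ D, (πhat D 1).toReal ∂μ
  set y := ∫ D, (πhat D 2).toReal ∂μ
  calc (1:ℝ)/2 ≤ ((1 - x) + (1 - y)) / 2 := by linarith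
  _ ≤ max (1 - x) (1 - y) := by
      rcases max_cases (1-x) (1-y) with ⟨h, h'⟩ | ⟨h, h'⟩ <;> rw [h] <;> linarith
  _ = max (∫ D, (1 - (πhat D 1).toReal) ∂μ) (∫ D, (1 - (πhat D 2).toReal) ∂μ) := by
      rw [hA, hB]
end

section
/- Fix an integer A ≥ 2, an integer T ≥ 1, and α ∈ [0,1]. On the action set {a₁, …, a_A}, define the demonstrator policies β¹ as the point mass at a₁ and, for each 2 ≤ i ≤ A, βⁱ(a₁) = 1 − α, βⁱ(a_i) = α, βⁱ(a) = 0 otherwise. Then for every pair of distinct indices i ≠ j in {1, …, A} and every measurable set E of datasets in {a₁,…,a_A}^T, it holds that P_{(βⁱ)^{⊗T}}(E) ≤ 2·P_{(βʲ)^{⊗T}}(E) + T·α, where (βⁱ)^{⊗T} denotes the T-fold product of βⁱ. -/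
open MeasureTheory
open scoped ENNReal

/-- Lemma B.1 of the paper: with demonstrators `β¹ = δ_{a₁}` and
`βⁱ = (1-α)·δ_{a₁} + α·δ_{a_i}` for `i ≥ 2` on `A` arms, for any distinct `i ≠ j` and any
measurable set `E` of datasets of `T` i.i.d. draws,
`P_{(βⁱ)^⊗T}(E) ≤ 2·P_{(βʲ)^⊗T}(E) + T·α`. -/
theorem stmt5 (A : ℕ) (hA : 2 ≤ A) (T : ℕ) (hT : 1 ≤ T)
    (α : ℝ) (hα : α ∈ Set.Icc (0 : ℝ) 1)
    (a₁ : Fin A) (ha₁ : a₁ = ⟨0, by omega⟩)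
    (β : Fin A → PMF (Fin A))
    (hβ0 : ∀ a, β a₁ a = if a = a₁ then 1 else 0)
    (hβi : ∀ i : Fin A, i ≠ a₁ → ∀ a, β i a =
      if a = a₁ then ENNReal.ofReal (1 - α) else if a = i then ENNReal.ofReal α else 0)
    (i j : Fin A) (hij : i ≠ j) (E : Set (Fin T → Fin A)) (hE : MeasurableSet E) :
    (Measure.pi fun _ : Fin T => (β i).toMeasure) E ≤
      2 * (Measure.pi fun _ : Fin T => (β j).toMeasure) E + T * ENNReal.ofReal α := by
  obtain ⟨hα0, hα1⟩ := hα
  set Pi := Measure.pi fun _ : Fin T => (β i).toMeasure with hPi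
  set Pj := Measure.pi fun _ : Fin T => (β j).toMeasure with hPj
  have hprob : ∀ k : Fin A, IsProbabilityMeasure
      (Measure.pi fun _ : Fin T => (β k).toMeasure) := fun k => by infer_instance
  have hPi1 : Pi E ≤ 1 := by
    haveI := hprob i; exact prob_le_one
  -- the constant-a₁ dataset
  set c : Fin T → Fin A := fun _ => a₁ with hc
  -- singleton mass of a₁ under β k is at least ofReal (1-α)
  have hmass : ∀ k : Fin A, ENNReal.ofReal (1 - α) ≤ β k a₁ := by
    intro k
    by_cases hk : k = a₁
    · subst hk; rw [hβ0]; simp only [if_pos rfl]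
      exact ENNReal.ofReal_le_one.2 (by linarith)
    · rw [hβi k hk]; simp
  -- mass of the complement of a₁ under β k is at most ofReal α
  have hcompl : ∀ k : Fin A, (β k).toMeasure {a₁}ᶜ ≤ ENNReal.ofReal α := by
    intro k
    have h1 : (β k).toMeasure {a₁} = β k a₁ := PMF.toMeasure_apply_singleton _ _ (by trivial)
    have := measure_compl (μ := (β k).toMeasure) (s := {a₁}) (by trivial) (measure_ne_top _ _)
    rw [this, measure_univ, h1]
    calc 1 - β k a₁ ≤ 1 - ENNReal.ofReal (1 - α) := by
          exact tsub_le_tsub le_rfl (hmass k)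
      _ ≤ ENNReal.ofReal α := by
          rw [tsub_le_iff_right, ← ENNReal.ofReal_add hα0 (by linarith)]
          simp
  -- marginal of a cylinder set
  have hcyl : ∀ (k : Fin A) (t : Fin T) (B : Set (Fin A)),
      (Measure.pi fun _ : Fin T => (β k).toMeasure) {f | f t ∈ B}
        = (β k).toMeasure B := by
    intro k t B
    have hset : {f : Fin T → Fin A | f t ∈ B}
        = Set.pi Set.univ (fun t' => if t' = t then B else Set.univ) := by
      ext f
      simp only [Set.mem_setOf_eq, Set.mem_pi, Set.mem_univ, forall_true_left]
      constructor
      · intro h t'; by_cases ht : t' = t <;> simp [ht, h]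
      · intro h; have := h t; simpa using this
    rw [hset, Measure.pi_pi]
    rw [Finset.prod_eq_single t (fun b _ hb => by simp [hb]) (by simp)]
    simp
  -- union bound: Pi of "not all coordinates equal a₁" ≤ T * α
  have hunion : ∀ k : Fin A,
      (Measure.pi fun _ : Fin T => (β k).toMeasure) {c}ᶜ ≤ T * ENNReal.ofReal α := by
    intro k
    have hsub : ({c}ᶜ : Set (Fin T → Fin A)) ⊆ ⋃ t : Fin T, {f | f t ∈ ({a₁}ᶜ : Set (Fin A))} := by
      intro f hf
      simp only [Set.mem_compl_iff, Set.mem_singleton_iff] at hf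
      by_contra h
      simp only [Set.mem_iUnion, not_exists, Set.mem_setOf_eq, Set.mem_compl_iff,
        Set.mem_singleton_iff, not_not] at h
      exact hf (funext fun t => h t)
    calc (Measure.pi fun _ : Fin T => (β k).toMeasure) {c}ᶜ
        ≤ ∑ t : Fin T, (Measure.pi fun _ : Fin T => (β k).toMeasure)
            {f | f t ∈ ({a₁}ᶜ : Set (Fin A))} :=
          le_trans (measure_mono hsub) (measure_iUnion_fintype_le _ _)
      _ = ∑ _t : Fin T, (β k).toMeasure {a₁}ᶜ := by
          simp only [hcyl]
      _ ≤ ∑ _t : Fin T, ENNReal.ofReal α := Finset.sum_le_sum fun _ _ => hcompl k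
      _ = T * ENNReal.ofReal α := by simp [mul_comm]
  by_cases hTα : (T : ℝ) * α ≤ 1
  · -- small-α case
    have hTα' : ENNReal.ofReal ((T : ℝ) * α) = T * ENNReal.ofReal α := by
      rw [ENNReal.ofReal_mul (by positivity)]
      congr 1
      simp
    by_cases hcE : c ∈ E
    · -- c ∈ E : Pi E ≤ 1 ≤ 2 * Pj E + Tα
      have hPjc : ENNReal.ofReal (1 - (T : ℝ) * α) ≤ Pj E := by
        have hsing : ({c} : Set (Fin T → Fin A)) = Set.pi Set.univ (fun _ => ({a₁} : Set (Fin A))) := by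
          ext f
          simp [funext_iff, hc]
        have h1 : Pj {c} = ∏ _t : Fin T, (β j).toMeasure {a₁} := by
          rw [hPj, hsing, Measure.pi_pi]
        have h2 : ENNReal.ofReal ((1 - α) ^ T) ≤ Pj {c} := by
          rw [h1, Finset.prod_const, Finset.card_univ, Fintype.card_fin,
            ENNReal.ofReal_pow (by linarith)]
          gcongr
          rw [PMF.toMeasure_apply_singleton _ _ (by trivial)]
          exact hmass j
        have h3 : (1 : ℝ) - (T : ℝ) * α ≤ (1 - α) ^ T := by
          have := one_add_mul_le_pow (a := -α) (by linarith) T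
          calc (1 : ℝ) - (T : ℝ) * α = 1 + T * (-α) := by ring
            _ ≤ (1 + -α) ^ T := this
            _ = (1 - α) ^ T := by ring_nf
        calc ENNReal.ofReal (1 - (T : ℝ) * α) ≤ ENNReal.ofReal ((1 - α) ^ T) :=
              ENNReal.ofReal_le_ofReal h3
          _ ≤ Pj {c} := h2
          _ ≤ Pj E := measure_mono (by simpa using hcE)
      calc Pi E ≤ 1 := hPi1
        _ ≤ 2 * ENNReal.ofReal (1 - (T : ℝ) * α) + T * ENNReal.ofReal α := by
            have hTα0 : (0 : ℝ) ≤ (T : ℝ) * α := mul_nonneg (Nat.cast_nonneg T) hα0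
            have h2 : (2 : ℝ≥0∞) * ENNReal.ofReal (1 - (T : ℝ) * α)
                = ENNReal.ofReal (2 * (1 - (T : ℝ) * α)) := by
              rw [ENNReal.ofReal_mul (by norm_num)]; norm_num
            rw [← hTα', h2, ← ENNReal.ofReal_add (by linarith) hTα0, ← ENNReal.ofReal_one]
            exact ENNReal.ofReal_le_ofReal (by linarith)
        _ ≤ 2 * Pj E + T * ENNReal.ofReal α := by
            gcongr
    · -- c ∉ E : E ⊆ {c}ᶜ
      have : Pi E ≤ T * ENNReal.ofReal α := by
        refine le_trans (measure_mono ?_) (hunion i)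
        intro f hf hfc
        exact hcE (by rwa [Set.mem_singleton_iff.1 hfc] at hf)
      exact le_trans this le_add_self
  · -- large-α case: Tα ≥ 1
    push_neg at hTα
    have : (1 : ℝ≥0∞) ≤ T * ENNReal.ofReal α := by
      rw [show ((T : ℝ≥0∞)) = ENNReal.ofReal T by simp,
        ← ENNReal.ofReal_mul (Nat.cast_nonneg T), ← ENNReal.ofReal_one]
      exact ENNReal.ofReal_le_ofReal hTα.le
    exact le_trans hPi1 (le_trans this le_add_self)
end

section
/- Let S be a nonempty finite set, p a probability mass function on S, T a positive integer, and X₁, …, X_T i.i.d. draws from p. For s ∈ S let N(s) = #{t ∈ {1,…,T} : Xₜ = s}. Let δ ∈ (0,1) and let λ ≥ 4·log(|S|/δ). Then with probability at least 1 − δ, simultaneously for all s ∈ S: N(s) + λ ≥ (1/2)·(p(s)·T + λ). -/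
open MeasureTheory
open scoped ENNReal

lemma pi_measure_finset_eq_sum {S : Type*} [Fintype S] [DecidableEq S]
    [MeasurableSpace S] [MeasurableSingletonClass S] (p : PMF S) (T : ℕ)
    (A : Finset (Fin T → S)) :
    Measure.pi (fun _ : Fin T => p.toMeasure) (A : Set (Fin T → S)) =
      ∑ x ∈ A, ∏ t, p (x t) := by
  have hsing : ∀ x : Fin T → S,
      Measure.pi (fun _ : Fin T => p.toMeasure) {x} = ∏ t, p (x t) := by
    intro x
    rw [← Set.univ_pi_singleton, Measure.pi_pi]
    simp [PMF.toMeasure_apply_singleton _ _ (measurableSet_singleton _)]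
  have := sum_measure_preimage_singleton (μ := Measure.pi (fun _ : Fin T => p.toMeasure))
    A (f := id) (fun y _ => MeasurableSet.of_discrete)
  simpa [hsing] using this.symm


lemma chernoff_core {S : Type*} [Fintype S] [DecidableEq S] (p : PMF S) (T : ℕ)
    (s : S) (lam : ℝ) (hlam0 : 0 < lam) :
    ∑ x ∈ Finset.univ.filter (fun x : Fin T → S =>
        ¬ ((1/2 : ℝ) * ((p s).toReal * T + lam) ≤
          ((Finset.univ.filter fun t => x t = s).card : ℝ) + lam)),
      ∏ t, (p (x t)).toReal ≤ Real.exp (-(lam/4)) := by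
  set q : ℝ := (p s).toReal with hq
  have hq0 : 0 ≤ q := ENNReal.toReal_nonneg
  have hq1 : q ≤ 1 := by
    have := p.coe_le_one s
    calc q ≤ (1 : ℝ≥0∞).toReal := ENNReal.toReal_mono (by simp) this
    _ = 1 := by simp
  set a : ℝ := q * T with ha
  have ha0 : 0 ≤ a := mul_nonneg hq0 (Nat.cast_nonneg _)
  by_cases hcase : a ≤ lam
  · have : (Finset.univ.filter (fun x : Fin T → S =>
        ¬ ((1/2 : ℝ) * (q * T + lam) ≤
          ((Finset.univ.filter fun t => x t = s).card : ℝ) + lam))) = ∅ := by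
      apply Finset.filter_false_of_mem
      intro x _
      push_neg
      have hN : (0:ℝ) ≤ ((Finset.univ.filter fun t => x t = s).card : ℝ) := Nat.cast_nonneg _
      linarith
    rw [this]
    simp [Real.exp_nonneg, le_of_lt (Real.exp_pos _)]
  · push_neg at hcase
    set m : ℝ := (a - lam) / 2 with hm
    set N : (Fin T → S) → ℕ := fun x => (Finset.univ.filter fun t => x t = s).card with hN
    have hw0 : ∀ x : Fin T → S, 0 ≤ ∏ t, (p (x t)).toReal := fun x =>
      Finset.prod_nonneg fun t _ => ENNReal.toReal_nonneg
    have key : ∀ x ∈ Finset.univ.filter (fun x : Fin T → S =>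
        ¬ ((1/2 : ℝ) * (q * T + lam) ≤ ((N x : ℝ) + lam))),
        ∏ t, (p (x t)).toReal ≤
          (∏ t, (p (x t)).toReal) * ((2:ℝ)^m * ((2:ℝ)⁻¹)^(N x)) := by
      intro x hx
      have hx' : (N x : ℝ) < m := by
        simp only [Finset.mem_filter] at hx
        have := hx.2
        push_neg at this
        nlinarith [this]
      have h2 : (2:ℝ)^(N x : ℝ) ≤ (2:ℝ)^m :=
        Real.rpow_le_rpow_of_exponent_le one_le_two hx'.le
      rw [Real.rpow_natCast] at h2
      have hfac : (1:ℝ) ≤ (2:ℝ)^m * ((2:ℝ)⁻¹)^(N x) := by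
        rw [inv_pow, ← div_eq_mul_inv, le_div_iff₀ (by positivity), one_mul]
        exact h2
      exact le_mul_of_one_le_right (hw0 x) hfac
    have hprod : ∀ x : Fin T → S, (∏ t, (p (x t)).toReal) * ((2:ℝ)⁻¹)^(N x)
        = ∏ t, ((p (x t)).toReal * (if x t = s then (2⁻¹:ℝ) else 1)) := by
      intro x
      rw [Finset.prod_mul_distrib]
      congr 1
      rw [Finset.prod_ite, Finset.prod_const, Finset.prod_const, one_pow, mul_one]
    have hsum1 : ∑ y, (p y).toReal = 1 := by
      have h := p.tsum_coe
      rw [tsum_fintype] at h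
      rw [← ENNReal.toReal_sum (fun y _ => p.apply_ne_top y), h, ENNReal.toReal_one]
    have hgs : ∑ y, (p y).toReal * (if y = s then (2⁻¹:ℝ) else 1) = 1 - q/2 := by
      have hy : ∀ y : S, (p y).toReal * (if y = s then (2⁻¹:ℝ) else 1)
          = (p y).toReal - (if y = s then q/2 else 0) := by
        intro y
        by_cases h : y = s
        · simp only [h, if_pos]
          rw [hq]; ring
        · simp [h]
      rw [Finset.sum_congr rfl (fun y _ => hy y), Finset.sum_sub_distrib, hsum1,
        Finset.sum_ite_eq' Finset.univ s (fun _ => q/2)]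
      simp
    have h1q : (0:ℝ) ≤ 1 - q/2 := by linarith
    have hexp1 : 1 - q/2 ≤ Real.exp (-(q/2)) := by
      have := Real.add_one_le_exp (-(q/2)); linarith
    have hpowT : (1 - q/2)^T ≤ Real.exp (-(a/2)) := by
      calc (1 - q/2)^T ≤ Real.exp (-(q/2)) ^ T := pow_le_pow_left₀ h1q hexp1 T
      _ = Real.exp (-(a/2)) := by
          rw [← Real.exp_nat_mul]; congr 1; rw [ha]; ring
    calc ∑ x ∈ Finset.univ.filter (fun x : Fin T → S =>
          ¬ ((1/2 : ℝ) * (q * ↑T + lam) ≤ ((N x : ℝ) + lam))),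
        ∏ t, (p (x t)).toReal
        ≤ ∑ x ∈ Finset.univ.filter (fun x : Fin T → S =>
          ¬ ((1/2 : ℝ) * (q * ↑T + lam) ≤ ((N x : ℝ) + lam))),
          (∏ t, (p (x t)).toReal) * ((2:ℝ)^m * ((2:ℝ)⁻¹)^(N x)) := Finset.sum_le_sum key
      _ ≤ ∑ x : Fin T → S, (∏ t, (p (x t)).toReal) * ((2:ℝ)^m * ((2:ℝ)⁻¹)^(N x)) := by
          apply Finset.sum_le_sum_of_subset_of_nonneg (Finset.filter_subset _ _)
          intro x _ _
          have := hw0 x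
          positivity
      _ = (2:ℝ)^m * ∑ x : Fin T → S, (∏ t, (p (x t)).toReal) * ((2:ℝ)⁻¹)^(N x) := by
          rw [Finset.mul_sum]
          exact Finset.sum_congr rfl (fun x _ => by ring)
      _ = (2:ℝ)^m * (∑ y, (p y).toReal * (if y = s then (2⁻¹:ℝ) else 1))^T := by
          rw [Finset.sum_congr rfl (fun x _ => hprod x)]
          congr 1
          exact (Fintype.sum_pow (fun y => (p y).toReal * (if y = s then (2⁻¹:ℝ) else 1)) T).symm
      _ = (2:ℝ)^m * (1 - q/2)^T := by rw [hgs]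
      _ ≤ (2:ℝ)^m * Real.exp (-(a/2)) := by
          have h2m : (0:ℝ) ≤ (2:ℝ)^m := (Real.rpow_pos_of_pos two_pos m).le
          exact mul_le_mul_of_nonneg_left hpowT h2m
      _ = Real.exp (Real.log 2 * m + -(a/2)) := by
          rw [Real.rpow_def_of_pos two_pos, Real.exp_add]
      _ ≤ Real.exp (-(lam/4)) := by
          apply Real.exp_le_exp.mpr
          have hl2 : Real.log 2 < 0.6931471808 := Real.log_two_lt_d9
          have hl2' : 0 < Real.log 2 := Real.log_pos one_lt_two
          have hmul : Real.log 2 * (a - lam) ≤ 0.6931471808 * (a - lam) :=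
            mul_le_mul_of_nonneg_right hl2.le (by linarith)
          rw [hm]
          nlinarith [hmul]


/-- Lemma B.3 of the paper (count concentration): for `X₁,…,X_T` i.i.d. from a pmf `p` on
a nonempty finite set `S`, with counts `N(s)`, if `λ ≥ 4·log(|S|/δ)` then with probability
at least `1 − δ`, simultaneously for all `s`: `N(s) + λ ≥ (1/2)·(p(s)·T + λ)`. -/
theorem stmt10 {S : Type*} [Fintype S] [Nonempty S] [DecidableEq S]
    [MeasurableSpace S] [MeasurableSingletonClass S]
    (p : PMF S) (T : ℕ) (hT : 0 < T) (δ lam : ℝ) (hδ : δ ∈ Set.Ioo (0 : ℝ) 1)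
    (hlam : 4 * Real.log ((Fintype.card S : ℝ) / δ) ≤ lam) :
    ENNReal.ofReal (1 - δ) ≤
      Measure.pi (fun _ : Fin T => p.toMeasure)
        {x : Fin T → S | ∀ s : S,
          (1 / 2) * ((p s).toReal * T + lam) ≤
            ((Finset.univ.filter fun t => x t = s).card : ℝ) + lam} := by
  obtain ⟨hδ0, hδ1⟩ := hδ
  set μ := Measure.pi (fun _ : Fin T => p.toMeasure) with hμ
  have hcard1 : (1:ℝ) ≤ (Fintype.card S : ℝ) := by
    exact_mod_cast Fintype.card_pos
  have hratio : 1 < (Fintype.card S : ℝ) / δ := by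
    rw [lt_div_iff₀ hδ0]; linarith
  have hlam0 : 0 < lam := by
    have := Real.log_pos hratio; linarith
  have hexp_le : Real.exp (-(lam/4)) ≤ δ / (Fintype.card S : ℝ) := by
    have h1 : (Fintype.card S : ℝ) / δ ≤ Real.exp (lam/4) := by
      have h2 := Real.exp_le_exp.mpr
        (show Real.log ((Fintype.card S:ℝ)/δ) ≤ lam/4 by linarith)
      rwa [Real.exp_log (by positivity)] at h2
    rw [Real.exp_neg, show δ / (Fintype.card S : ℝ) = ((Fintype.card S : ℝ)/δ)⁻¹ by
      rw [inv_div]]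
    exact inv_anti₀ (by positivity) h1
  set B : S → Finset (Fin T → S) := fun s => Finset.univ.filter (fun x : Fin T → S =>
    ¬ ((1/2 : ℝ) * ((p s).toReal * T + lam) ≤
      ((Finset.univ.filter fun t => x t = s).card : ℝ) + lam)) with hB
  have per_s : ∀ s : S, μ (B s : Set (Fin T → S)) ≤
      ENNReal.ofReal (δ / (Fintype.card S : ℝ)) := by
    intro s
    rw [hμ, pi_measure_finset_eq_sum]
    have heq : ∀ x : Fin T → S, ∏ t, p (x t) =
        ENNReal.ofReal (∏ t, (p (x t)).toReal) := by
      intro x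
      rw [← ENNReal.toReal_prod, ENNReal.ofReal_toReal]
      exact ENNReal.prod_ne_top (fun t _ => p.apply_ne_top _)
    calc ∑ x ∈ B s, ∏ t, p (x t)
        = ENNReal.ofReal (∑ x ∈ B s, ∏ t, (p (x t)).toReal) := by
          rw [ENNReal.ofReal_sum_of_nonneg
            (fun x _ => Finset.prod_nonneg fun t _ => ENNReal.toReal_nonneg)]
          exact Finset.sum_congr rfl fun x _ => heq x
      _ ≤ ENNReal.ofReal (δ / (Fintype.card S : ℝ)) :=
          ENNReal.ofReal_le_ofReal
            ((chernoff_core p T s lam hlam0).trans hexp_le)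
  set G : Set (Fin T → S) := {x : Fin T → S | ∀ s : S,
          (1 / 2 : ℝ) * ((p s).toReal * T + lam) ≤
            ((Finset.univ.filter fun t => x t = s).card : ℝ) + lam} with hG
  have hGc : Gᶜ ⊆ ⋃ s : S, (B s : Set (Fin T → S)) := by
    intro x hx
    simp only [hG, Set.mem_compl_iff, Set.mem_setOf_eq, not_forall] at hx
    obtain ⟨s, hs⟩ := hx
    refine Set.mem_iUnion.mpr ⟨s, ?_⟩
    simp only [hB, Finset.coe_filter, Set.mem_setOf_eq, Finset.mem_univ, true_and]
    exact hs
  have hμGc : μ Gᶜ ≤ ENNReal.ofReal δ := by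
    calc μ Gᶜ ≤ μ (⋃ s : S, (B s : Set (Fin T → S))) := measure_mono hGc
      _ ≤ ∑' s : S, μ (B s : Set (Fin T → S)) := measure_iUnion_le _
      _ = ∑ s : S, μ (B s : Set (Fin T → S)) := tsum_fintype _
      _ ≤ ∑ _s : S, ENNReal.ofReal (δ / (Fintype.card S : ℝ)) :=
          Finset.sum_le_sum (fun s _ => per_s s)
      _ = (Fintype.card S : ℝ≥0∞) * ENNReal.ofReal (δ / (Fintype.card S : ℝ)) := by
          rw [Finset.sum_const, nsmul_eq_mul]; simp
      _ = ENNReal.ofReal δ := by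
          rw [← ENNReal.ofReal_natCast, ← ENNReal.ofReal_mul (by positivity)]
          congr 1
          field_simp
  have huniv : μ Set.univ = 1 := measure_univ
  have h1 : (1:ℝ≥0∞) ≤ μ G + ENNReal.ofReal δ := by
    calc (1:ℝ≥0∞) = μ (G ∪ Gᶜ) := by rw [Set.union_compl_self]; exact huniv.symm
      _ ≤ μ G + μ Gᶜ := measure_union_le _ _
      _ ≤ μ G + ENNReal.ofReal δ := add_le_add_right hμGc _
  rw [show ENNReal.ofReal (1-δ) = 1 - ENNReal.ofReal δ by
    rw [ENNReal.ofReal_sub _ hδ0.le, ENNReal.ofReal_one]]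
  exact tsub_le_iff_right.mpr h1
end

section
/- Let A ≥ 1 be an integer and let p be a probability mass function on an action set of size A. Let n ≥ 1 be an integer and X₁, …, X_n i.i.d. draws from p; for each action a let N(a) = #{t : Xₜ = a}. Fix α ∈ [0,1], a real λ ≥ A, and δ ∈ (0, 0.9], and define π̃(a) = (1−α)·N(a)/n + α·(N(a) + λ/A)/(n + λ). Then for each action a, with probability at least 1 − δ, π̃(a) ≥ α · min{ p(a) / (64·log(1/δ)), 1/(2λ) }. -/
set_option maxHeartbeats 1000000

open MeasureTheory
open scoped ENNReal

lemma aux_pi_preimage {ι : Type*} [Fintype ι] [DecidableEq ι] {β : Type*} [mβ : MeasurableSpace β]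
    (sets : ι → Set β) (T : Finset ι) :
    (⋂ i ∈ T, (fun x : ι → β => x i) ⁻¹' sets i)
      = Set.pi Set.univ (fun i => if i ∈ T then sets i else Set.univ) := by
  ext x
  simp only [Set.mem_iInter, Set.mem_preimage, Set.mem_pi, Set.mem_univ, true_implies]
  constructor
  · intro h i
    split_ifs with hi
    · exact h i hi
    · trivial
  · intro h i hi
    have := h i
    rwa [if_pos hi] at this

lemma aux_pi_measure {ι : Type*} [Fintype ι] [DecidableEq ι] {β : Type*} [mβ : MeasurableSpace β]
    (ν : Measure β) [IsProbabilityMeasure ν] (sets : ι → Set β) (T : Finset ι) :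
    Measure.pi (fun _ : ι => ν) (⋂ i ∈ T, (fun x : ι → β => x i) ⁻¹' sets i)
      = ∏ i ∈ T, ν (sets i) := by
  rw [aux_pi_preimage, Measure.pi_pi]
  rw [show (fun i => ν (if i ∈ T then sets i else Set.univ))
      = fun i => if i ∈ T then ν (sets i) else 1 by
    funext i; split_ifs with h <;> simp [measure_univ]]
  rw [Finset.prod_ite_mem, Finset.univ_inter]

lemma aux_iIndep {ι : Type*} [Fintype ι] [DecidableEq ι] {β : Type*} [mβ : MeasurableSpace β]
    (ν : Measure β) [IsProbabilityMeasure ν] :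
    ProbabilityTheory.iIndepFun (fun i (x : ι → β) => x i)
      (Measure.pi fun _ => ν) := by
  rw [ProbabilityTheory.iIndepFun_iff_measure_inter_preimage_eq_mul]
  intro S sets _
  rw [aux_pi_measure]
  refine Finset.prod_congr rfl fun i _ => ?_
  have h := aux_pi_measure (ι := ι) ν sets {i}
  simpa using h.symm

lemma aux_eval_measure {ι : Type*} [Fintype ι] [DecidableEq ι] {β : Type*} [mβ : MeasurableSpace β]
    (ν : Measure β) [IsProbabilityMeasure ν] (t : ι) (s : Set β) :
    Measure.pi (fun _ : ι => ν) ((fun x : ι → β => x t) ⁻¹' s) = ν s := by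
  have h := aux_pi_measure (ι := ι) ν (fun _ => s) {t}
  simpa using h

/-- Per-state core of Lemma B.2: with `X₁,…,X_n` i.i.d. from pmf `p` on `A` actions, counts
`N(a)`, and the regularized mixture `π̃(a) = (1−α)·N(a)/n + α·(N(a)+λ/A)/(n+λ)`, for each
action `a`, with probability at least `1−δ`,
`π̃(a) ≥ α·min{p(a)/(64·log(1/δ)), 1/(2λ)}`. -/
theorem stmt11 (A : ℕ) (hA : 1 ≤ A) (p : PMF (Fin A)) (n : ℕ) (hn : 1 ≤ n)
    (α : ℝ) (hα : α ∈ Set.Icc (0 : ℝ) 1) (lam : ℝ) (hlam : (A : ℝ) ≤ lam)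
    (δ : ℝ) (hδ : δ ∈ Set.Ioc (0 : ℝ) 0.9) :
    ∀ a : Fin A,
      ENNReal.ofReal (1 - δ) ≤
        Measure.pi (fun _ : Fin n => p.toMeasure)
          {x : Fin n → Fin A |
            α * min ((p a).toReal / (64 * Real.log (1 / δ))) (1 / (2 * lam)) ≤
              (1 - α) * ((Finset.univ.filter fun t => x t = a).card : ℝ) / n +
                α * (((Finset.univ.filter fun t => x t = a).card : ℝ) + lam / A) /
                  (n + lam)} := by
  intro a
  obtain ⟨hα0, hα1⟩ := hα
  obtain ⟨hδ0, hδ9⟩ := hδ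
  set μ := Measure.pi (fun _ : Fin n => p.toMeasure) with hμdef
  set P : ℝ := (p a).toReal with hPdef
  set L : ℝ := Real.log (1 / δ) with hLdef
  have hδ1 : δ < 1 := by linarith [show (0.9:ℝ) < 1 by norm_num]
  have hA0 : (0:ℝ) < A := by exact_mod_cast hA
  have hlam0 : (0:ℝ) < lam := lt_of_lt_of_le hA0 hlam
  have hn0 : (0:ℝ) < n := by exact_mod_cast hn
  have hP0 : 0 ≤ P := ENNReal.toReal_nonneg
  have hP1 : P ≤ 1 := by
    have h := p.coe_le_one a
    have := ENNReal.toReal_mono (by norm_num) h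
    simpa using this
  have hL16 : (1:ℝ)/16 ≤ L := by
    rw [hLdef, Real.le_log_iff_exp_le (by positivity)]
    have h1 : Real.exp (1/16) ≤ 16/15 := by
      have h2 := Real.add_one_le_exp (-(1/16) : ℝ)
      have h3 : Real.exp (-(1/16) : ℝ) = (Real.exp (1/16))⁻¹ := Real.exp_neg _
      rw [h3] at h2
      have h4 : (0:ℝ) < Real.exp (1/16) := Real.exp_pos _
      rw [inv_eq_one_div, le_div_iff₀ h4] at h2
      nlinarith
    have h5 : (16:ℝ)/15 ≤ 1/δ := by
      rw [le_div_iff₀ hδ0]; nlinarith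
    linarith
  have hL0 : 0 < L := by linarith
  have h1lam : 1 ≤ lam / A := (one_le_div hA0).2 hlam
  -- the generic reduction: it suffices that min ≤ (Nx + lam/A)/(n+lam)
  have hstep : ∀ Nx : ℝ, 0 ≤ Nx →
      min (P / (64 * L)) (1 / (2 * lam)) ≤ (Nx + lam / A) / (n + lam) →
      α * min (P / (64 * L)) (1 / (2 * lam)) ≤
        (1 - α) * Nx / n + α * (Nx + lam / A) / (n + lam) := by
    intro Nx hNx hmin
    have h1 : 0 ≤ (1 - α) * Nx / (n:ℝ) := div_nonneg (mul_nonneg (by linarith) hNx) hn0.le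
    have h2 : α * min (P / (64 * L)) (1 / (2 * lam)) ≤ α * ((Nx + lam / A) / (n + lam)) :=
      mul_le_mul_of_nonneg_left hmin hα0
    have h3 : α * ((Nx + lam / A) / ((n:ℝ) + lam)) = α * (Nx + lam / A) / (n + lam) :=
      (mul_div_assoc _ _ _).symm
    linarith
  by_cases hnl : (n : ℝ) ≤ lam
  · -- deterministic case: lam ≥ n
    have hall : ∀ x : Fin n → Fin A,
        α * min (P / (64 * L)) (1 / (2 * lam)) ≤
          (1 - α) * ((Finset.univ.filter fun t => x t = a).card : ℝ) / n +
            α * (((Finset.univ.filter fun t => x t = a).card : ℝ) + lam / A) / (n + lam) := by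
      intro x
      apply hstep _ (by positivity)
      refine le_trans (min_le_right _ _) ?_
      rw [div_le_div_iff₀ (by positivity) (by positivity)]
      have hNx : (0:ℝ) ≤ ((Finset.univ.filter fun t => x t = a).card : ℝ) := by positivity
      nlinarith [mul_le_mul_of_nonneg_right h1lam hlam0.le]
    have : {x : Fin n → Fin A |
        α * min (P / (64 * L)) (1 / (2 * lam)) ≤
          (1 - α) * ((Finset.univ.filter fun t => x t = a).card : ℝ) / n +
            α * (((Finset.univ.filter fun t => x t = a).card : ℝ) + lam / A) / (n + lam)}
        = Set.univ := Set.eq_univ_of_forall hall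
    rw [this]
    simp only [measure_univ]
    exact ENNReal.ofReal_le_one.2 (by linarith)
  · push_neg at hnl
    by_cases hnp : (n : ℝ) * P < 32 * L
    · -- deterministic case: n P < 32 L
      have hall : ∀ x : Fin n → Fin A,
          α * min (P / (64 * L)) (1 / (2 * lam)) ≤
            (1 - α) * ((Finset.univ.filter fun t => x t = a).card : ℝ) / n +
              α * (((Finset.univ.filter fun t => x t = a).card : ℝ) + lam / A) / (n + lam) := by
        intro x
        apply hstep _ (by positivity)
        refine le_trans (min_le_left _ _) ?_
        rw [div_le_div_iff₀ (by positivity) (by positivity)]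
        have hNx : (0:ℝ) ≤ ((Finset.univ.filter fun t => x t = a).card : ℝ) := by positivity
        nlinarith
      have : {x : Fin n → Fin A |
          α * min (P / (64 * L)) (1 / (2 * lam)) ≤
            (1 - α) * ((Finset.univ.filter fun t => x t = a).card : ℝ) / n +
              α * (((Finset.univ.filter fun t => x t = a).card : ℝ) + lam / A) / (n + lam)}
          = Set.univ := Set.eq_univ_of_forall hall
      rw [this]
      simp only [measure_univ]
      exact ENNReal.ofReal_le_one.2 (by linarith)
    · -- probabilistic case
      push_neg at hnp
      classical
      set X : Fin n → (Fin n → Fin A) → ℝ := fun t x => if x t = a then 1 else 0 with hXdef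
      have hXmeas : ∀ t, Measurable (X t) := by
        intro t
        exact Measurable.comp (f := fun x : Fin n → Fin A => x t)
          (g := fun b : Fin A => if b = a then (1:ℝ) else 0)
          Measurable.of_discrete (measurable_pi_apply t)
      have h_indep : ProbabilityTheory.iIndepFun X μ := by
        have h := (aux_iIndep (ι := Fin n) (p.toMeasure)).comp
          (fun _ (b : Fin A) => if b = a then (1:ℝ) else 0)
          (fun _ => Measurable.of_discrete)
        exact h
      have hμE : ∀ t : Fin n, μ ((fun x : Fin n → Fin A => x t) ⁻¹' {a}) = p a := by
        intro t
        rw [hμdef, aux_eval_measure]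
        exact p.toMeasure_apply_singleton a (measurableSet_singleton a)
      have hmgf : ∀ (t : Fin n) (t0 : ℝ),
          ProbabilityTheory.mgf (X t) μ t0 = 1 + P * (Real.exp t0 - 1) := by
        intro t t0
        have hEmeas : MeasurableSet ((fun x : Fin n → Fin A => x t) ⁻¹' {a}) :=
          (measurable_pi_apply t) (measurableSet_singleton a)
        have hfun : (fun x => Real.exp (t0 * X t x))
            = fun x => Set.indicator ((fun x : Fin n → Fin A => x t) ⁻¹' {a})
                (fun _ => Real.exp t0 - 1) x + 1 := by
          funext x
          by_cases hx : x t = a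
          · simp [hXdef, hx, Set.indicator, mul_one]
          · simp [hXdef, hx, Set.indicator]
        rw [ProbabilityTheory.mgf, hfun,
          integral_add (Integrable.of_finite) (integrable_const 1),
          integral_indicator_const _ hEmeas, integral_const, measureReal_def, measureReal_def, hμE t]
        simp only [smul_eq_mul, measure_univ, ENNReal.toReal_one, one_mul, mul_one]
        rw [← hPdef]
        ring
      have hNsum : ∀ x : Fin n → Fin A,
          ((Finset.univ.filter fun t => x t = a).card : ℝ) = (∑ t, X t) x := by
        intro x
        rw [Finset.card_filter]
        push_cast
        simp [hXdef, Finset.sum_apply]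
      set t0 : ℝ := -Real.log 2 with ht0def
      set ε : ℝ := n * P / 2 with hεdef
      have hlog2 : Real.log 2 < 0.6931471808 := Real.log_two_lt_d9
      have hlog2pos : 0 < Real.log 2 := Real.log_pos one_lt_two
      have hint : Integrable (fun ω => Real.exp (t0 * (∑ t, X t) ω)) μ := Integrable.of_finite
      have hcher := ProbabilityTheory.measure_le_le_exp_mul_mgf (μ := μ) (X := ∑ t, X t) ε
        (by rw [ht0def]; linarith) hint
      have hmgfsum : ProbabilityTheory.mgf (∑ t, X t) μ t0 = (1 - P / 2) ^ n := by
        rw [ProbabilityTheory.iIndepFun.mgf_sum h_indep hXmeas Finset.univ]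
        have hexp : Real.exp t0 = 1 / 2 := by
          rw [ht0def, Real.exp_neg, Real.exp_log two_pos]; norm_num
        have : ∀ t : Fin n, ProbabilityTheory.mgf (X t) μ t0 = 1 - P / 2 := by
          intro t; rw [hmgf t t0, hexp]; ring
        rw [Finset.prod_congr rfl fun t _ => this t, Finset.prod_const, Finset.card_univ,
          Fintype.card_fin]
      have hbound : Real.exp (-t0 * ε) * (1 - P / 2) ^ n ≤ δ := by
        have hstep1 : (1 - P / 2) ^ n ≤ Real.exp (-(P / 2)) ^ n :=
          pow_le_pow_left₀ (by linarith) (by linarith [Real.add_one_le_exp (-(P / 2))]) n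
        have hstep2 : Real.exp (-(P / 2)) ^ n = Real.exp ((n : ℝ) * (-(P / 2))) :=
          (Real.exp_nat_mul _ n).symm
        have hlogδ : Real.log δ = -L := by
          rw [hLdef, one_div, Real.log_inv]; ring
        have hexple : Real.exp (-t0 * ε + (n : ℝ) * (-(P / 2))) ≤ δ := by
          rw [← Real.exp_log hδ0]
          apply Real.exp_le_exp.2
          rw [hlogδ, ht0def, hεdef]
          have hkey : 32 * L * (1 - Real.log 2) ≤ (n : ℝ) * P * (1 - Real.log 2) :=
            mul_le_mul_of_nonneg_right hnp (by linarith)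
          have h1 : L * Real.log 2 ≤ L * 0.6931471808 :=
            mul_le_mul_of_nonneg_left hlog2.le hL0.le
          linarith
        calc Real.exp (-t0 * ε) * (1 - P / 2) ^ n
            ≤ Real.exp (-t0 * ε) * Real.exp ((n : ℝ) * (-(P / 2))) := by
              rw [hstep2] at hstep1
              exact mul_le_mul_of_nonneg_left hstep1 (Real.exp_pos _).le
          _ = Real.exp (-t0 * ε + (n : ℝ) * (-(P / 2))) := (Real.exp_add _ _).symm
          _ ≤ δ := hexple
      set B : Set (Fin n → Fin A) := {ω | (∑ t, X t) ω ≤ ε} with hBdef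
      have hBmeas : MeasurableSet B := (Set.toFinite B).measurableSet
      have hBle : μ B ≤ ENNReal.ofReal δ := by
        rw [← ENNReal.ofReal_toReal (measure_ne_top μ B)]
        apply ENNReal.ofReal_le_ofReal
        calc (μ B).toReal ≤ Real.exp (-t0 * ε) * ProbabilityTheory.mgf (∑ t, X t) μ t0 := hcher
          _ = Real.exp (-t0 * ε) * (1 - P / 2) ^ n := by rw [hmgfsum]
          _ ≤ δ := hbound
      have hsub : Bᶜ ⊆ {x : Fin n → Fin A |
          α * min (P / (64 * L)) (1 / (2 * lam)) ≤
            (1 - α) * ((Finset.univ.filter fun t => x t = a).card : ℝ) / n +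
              α * (((Finset.univ.filter fun t => x t = a).card : ℝ) + lam / A) / (n + lam)} := by
        intro x hx
        simp only [hBdef, Set.mem_compl_iff, Set.mem_setOf_eq, not_le] at hx
        have hNx : ε ≤ ((Finset.univ.filter fun t => x t = a).card : ℝ) := by
          rw [hNsum x]; linarith
        have hNx0 : (0:ℝ) ≤ ((Finset.univ.filter fun t => x t = a).card : ℝ) := by positivity
        apply hstep _ hNx0
        refine le_trans (min_le_left _ _) ?_
        rw [div_le_div_iff₀ (by positivity) (by positivity)]
        rw [hεdef] at hNx
        nlinarith [mul_le_mul_of_nonneg_right hNx (by linarith : (0:ℝ) ≤ 64 * L - 4),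
          mul_nonneg hP0 (by linarith : (0:ℝ) ≤ (n:ℝ) - lam)]
      calc ENNReal.ofReal (1 - δ) ≤ 1 - ENNReal.ofReal δ := by
            rw [ENNReal.ofReal_sub _ hδ0.le, ENNReal.ofReal_one]
        _ ≤ 1 - μ B := tsub_le_tsub_left hBle 1
        _ = μ Bᶜ := (prob_compl_eq_one_sub hBmeas).symm
        _ ≤ _ := measure_mono hsub
end
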